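/- For every λ ∈ 𝔽_q that is a nonzero square (λ = t² for some t ∈ 𝔽_q^×), the diagonal 2l×2l matrix diag(1,…,1,λ,1,…,1,λ⁻¹) (with λ at index l and λ⁻¹ at index −l, and 1 at all other indices) lies in the subgroup of GL(2l,𝔽_q) generated by the D_l Chevalley generators. -/

import Mathlib

open Matrix

section Aux

variable {n : Type*} [DecidableEq n] [Fintype n] {K : Type*} [Field K]

private lemma aux_gen_mul (x y z w : n) (h1 : y ≠ x) (h2 : y ≠ z) (h3 : w ≠ x)
    (h4 : w ≠ z) (c : K) :
    (1 + c • (Matrix.single x y (1:K) - Matrix.single z w (1:K))) *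
      (1 + (-c) • (Matrix.single x y (1:K) - Matrix.single z w (1:K))) = 1 := by
  simp only [mul_add, add_mul, mul_one, one_mul, mul_sub, sub_mul,
    smul_mul_assoc, mul_smul_comm, smul_smul, neg_mul, mul_neg, neg_neg,
    smul_neg, neg_smul,
    Matrix.single_mul_single_same, Matrix.single_mul_single_of_ne,
    h1, h2, h3, h4, ne_eq, not_false_iff,
    smul_zero, zero_smul, add_zero, zero_add, mul_zero, zero_mul, sub_zero,
    zero_sub, neg_zero, mul_one, one_mul]
  module

/-- A Chevalley-type elementary matrix `1 + c (E_{x y} - E_{z w})`, as a unit. -/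
private def genU (x y z w : n) (h1 : y ≠ x) (h2 : y ≠ z) (h3 : w ≠ x) (h4 : w ≠ z)
    (c : K) : (Matrix n n K)ˣ where
  val := 1 + c • (Matrix.single x y (1:K) - Matrix.single z w (1:K))
  inv := 1 + (-c) • (Matrix.single x y (1:K) - Matrix.single z w (1:K))
  val_inv := aux_gen_mul x y z w h1 h2 h3 h4 c
  inv_val := by
    have := aux_gen_mul x y z w h1 h2 h3 h4 (-c)
    rwa [neg_neg] at this

@[simp] private lemma genU_val (x y z w : n) (h1 : y ≠ x) (h2 : y ≠ z) (h3 : w ≠ x)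
    (h4 : w ≠ z) (c : K) :
    (genU x y z w h1 h2 h3 h4 c : Matrix n n K)
      = 1 + c • (Matrix.single x y (1:K) - Matrix.single z w (1:K)) := rfl

set_option maxHeartbeats 4000000 in
private lemma h_formula (p q p' q' : n) (hpq : p ≠ q) (hpp' : p ≠ p') (hpq' : p ≠ q')
    (hqp' : q ≠ p') (hqq' : q ≠ q') (hp'q' : p' ≠ q') (s : K) (hs : s ≠ 0) :
    (1 + s • (Matrix.single p q (1:K) - Matrix.single q' p' (1:K))) *
      (1 + (-s⁻¹) • (Matrix.single q p (1:K) - Matrix.single p' q' (1:K))) *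
      (1 + s • (Matrix.single p q (1:K) - Matrix.single q' p' (1:K))) *
      (1 + (-1:K) • (Matrix.single p q (1:K) - Matrix.single q' p' (1:K))) *
      (1 + (1:K) • (Matrix.single q p (1:K) - Matrix.single p' q' (1:K))) *
      (1 + (-1:K) • (Matrix.single p q (1:K) - Matrix.single q' p' (1:K)))
    = 1 + (s-1) • Matrix.single p p (1:K) + (s⁻¹-1) • Matrix.single q q (1:K)
        + (s⁻¹-1) • Matrix.single p' p' (1:K) + (s-1) • Matrix.single q' q' (1:K) := by
  simp only [mul_add, add_mul, mul_one, one_mul, mul_sub, sub_mul,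
    smul_mul_assoc, mul_smul_comm, smul_smul, neg_mul, mul_neg, neg_neg,
    smul_neg, neg_smul,
    Matrix.single_mul_single_same, Matrix.single_mul_single_of_ne,
    hpq, hpq.symm, hpp', hpp'.symm, hpq', hpq'.symm, hqp', hqp'.symm,
    hqq', hqq'.symm, hp'q', hp'q'.symm, ne_eq, not_false_iff,
    smul_zero, zero_smul, add_zero, zero_add, mul_zero, zero_mul, sub_zero,
    zero_sub, neg_zero, mul_one, one_mul]
  match_scalars <;> field_simp <;> ring

set_option maxHeartbeats 2000000 in
private lemma final_mul (p q p' q' : n) (hpq : p ≠ q) (hpp' : p ≠ p') (hpq' : p ≠ q')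
    (hqp' : q ≠ p') (hqq' : q ≠ q') (hp'q' : p' ≠ q') (t : K) (ht : t ≠ 0) :
    (1 + (t-1) • Matrix.single p p (1:K) + (t⁻¹-1) • Matrix.single q' q' (1:K)
        + (t⁻¹-1) • Matrix.single p' p' (1:K) + (t-1) • Matrix.single q q (1:K)) *
    (1 + (t⁻¹-1) • Matrix.single p p (1:K) + (t⁻¹⁻¹-1) • Matrix.single q q (1:K)
        + (t⁻¹⁻¹-1) • Matrix.single p' p' (1:K) + (t⁻¹-1) • Matrix.single q' q' (1:K))
    = 1 + (t^2-1) • Matrix.single q q (1:K)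
        + ((t^2)⁻¹-1) • Matrix.single q' q' (1:K) := by
  simp only [mul_add, add_mul, mul_one, one_mul, mul_sub, sub_mul,
    smul_mul_assoc, mul_smul_comm, smul_smul, neg_mul, mul_neg, neg_neg,
    smul_neg, neg_smul,
    Matrix.single_mul_single_same, Matrix.single_mul_single_of_ne,
    hpq, hpq.symm, hpp', hpp'.symm, hpq', hpq'.symm, hqp', hqp'.symm,
    hqq', hqq'.symm, hp'q', hp'q'.symm, ne_eq, not_false_iff,
    smul_zero, zero_smul, add_zero, zero_add, mul_zero, zero_mul, sub_zero,
    zero_sub, neg_zero, mul_one, one_mul]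
  match_scalars <;> field_simp <;> ring

private lemma diag_formula {l : ℕ} (b : Fin l) (hb : (b:ℕ) = l - 1) (lam mu : K) :
    Matrix.diagonal (Sum.elim
        (fun i : Fin l => if (i : ℕ) = l - 1 then lam else 1)
        (fun i : Fin l => if (i : ℕ) = l - 1 then mu else 1))
      = 1 + (lam-1) • Matrix.single (Sum.inl b) (Sum.inl b) (1:K)
          + (mu-1) • Matrix.single (Sum.inr b) (Sum.inr b) (1:K) := by
  have key : ∀ i : Fin l, ((i : ℕ) = l - 1) ↔ i = b := by
    intro i; rw [Fin.ext_iff, hb]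
  ext x y
  rcases x with i | i <;> rcases y with j | j <;>
    simp only [Matrix.diagonal_apply, Matrix.add_apply, Matrix.smul_apply,
      Matrix.one_apply, Matrix.single, Matrix.of_apply, Sum.elim_inl,
      Sum.elim_inr, Sum.inl.injEq, Sum.inr.injEq, key, smul_eq_mul] <;>
    [skip; simp; simp; skip] <;>
    · by_cases hij : i = j
      · subst hij
        by_cases hib : i = b
        · subst hib; simp
        · simp [hib, Ne.symm hib]
      · have hbij : ¬(b = i ∧ b = j) := by rintro ⟨rfl, rfl⟩; exact hij rfl
        simp [hij, hbij]

end Aux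

/-- The `D_l` Chevalley generators, as a set of invertible `2l × 2l` matrices.
Index `Sum.inl i` plays the role of `i ∈ {1,…,l}` and `Sum.inr i` of `-i`. -/
def DlGens (K : Type*) [Field K] (l : ℕ) :
    Set (Matrix (Fin l ⊕ Fin l) (Fin l ⊕ Fin l) K)ˣ :=
  {u | ∃ t : K,
    (∃ i j : Fin l, i ≠ j ∧ (u : Matrix (Fin l ⊕ Fin l) (Fin l ⊕ Fin l) K) =
      1 + t • (Matrix.single (Sum.inl i) (Sum.inl j) (1 : K)
        - Matrix.single (Sum.inr j) (Sum.inr i) (1 : K))) ∨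
    (∃ i j : Fin l, i < j ∧ (u : Matrix (Fin l ⊕ Fin l) (Fin l ⊕ Fin l) K) =
      1 + t • (Matrix.single (Sum.inl i) (Sum.inr j) (1 : K)
        - Matrix.single (Sum.inl j) (Sum.inr i) (1 : K))) ∨
    (∃ i j : Fin l, i < j ∧ (u : Matrix (Fin l ⊕ Fin l) (Fin l ⊕ Fin l) K) =
      1 + t • (Matrix.single (Sum.inr i) (Sum.inl j) (1 : K)
        - Matrix.single (Sum.inr j) (Sum.inl i) (1 : K)))}

/-- for every nonzero square `λ = t²`, `diag(1,…,1,λ,1,…,1,λ⁻¹)`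
(with `λ` at index `l` and `λ⁻¹` at index `-l`) is a product of `D_l`
Chevalley generators. -/
theorem stmt_9 (K : Type*) [Field K] [Fintype K] (hchar : ringChar K ≠ 2)
    (l : ℕ) (hl : 2 ≤ l) (lam t : K) (ht : t ≠ 0) (hlam : lam = t ^ 2) :
    ∃ u ∈ Subgroup.closure (DlGens K l),
      (u : Matrix (Fin l ⊕ Fin l) (Fin l ⊕ Fin l) K) =
        Matrix.diagonal (Sum.elim
          (fun i : Fin l => if (i : ℕ) = l - 1 then lam else 1)
          (fun i : Fin l => if (i : ℕ) = l - 1 then lam⁻¹ else 1)) := by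
  subst hlam
  set a : Fin l := ⟨l - 2, by omega⟩ with ha
  set b : Fin l := ⟨l - 1, by omega⟩ with hb
  have hab : a ≠ b := by
    simp only [ha, hb, ne_eq, Fin.mk.injEq]; omega
  have hab_lt : a < b := by
    simp only [ha, hb, Fin.lt_def]; omega
  -- the four relevant indices
  set p : Fin l ⊕ Fin l := Sum.inl a
  set q : Fin l ⊕ Fin l := Sum.inl b
  set p' : Fin l ⊕ Fin l := Sum.inr a
  set q' : Fin l ⊕ Fin l := Sum.inr b
  have h1 : p ≠ q := by simp [p, q, hab]
  have h2 : p ≠ p' := by simp [p, p']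
  have h3 : p ≠ q' := by simp [p, q']
  have h4 : q ≠ p' := by simp [q, p']
  have h5 : q ≠ q' := by simp [q, q']
  have h6 : p' ≠ q' := by simp [p', q', hab]
  -- generator units
  let Xa : K → (Matrix (Fin l ⊕ Fin l) (Fin l ⊕ Fin l) K)ˣ :=
    fun c => genU p q q' p' h1.symm h5 h2.symm h6 c
  let Ya : K → (Matrix (Fin l ⊕ Fin l) (Fin l ⊕ Fin l) K)ˣ :=
    fun c => genU q p p' q' h1 h2 h5.symm h6.symm c
  let Xb : K → (Matrix (Fin l ⊕ Fin l) (Fin l ⊕ Fin l) K)ˣ :=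
    fun c => genU p q' q p' h3.symm h5.symm h2.symm h4.symm c
  let Yb : K → (Matrix (Fin l ⊕ Fin l) (Fin l ⊕ Fin l) K)ˣ :=
    fun c => genU q' p p' q h3 h2 h5 h4 c
  -- memberships
  have memXa : ∀ c : K, Xa c ∈ Subgroup.closure (DlGens K l) := fun c =>
    Subgroup.subset_closure ⟨c, Or.inl ⟨a, b, hab, rfl⟩⟩
  have memYa : ∀ c : K, Ya c ∈ Subgroup.closure (DlGens K l) := fun c =>
    Subgroup.subset_closure ⟨c, Or.inl ⟨b, a, hab.symm, rfl⟩⟩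
  have memXb : ∀ c : K, Xb c ∈ Subgroup.closure (DlGens K l) := fun c =>
    Subgroup.subset_closure ⟨c, Or.inr (Or.inl ⟨a, b, hab_lt, rfl⟩)⟩
  have memYb : ∀ c : K, Yb c ∈ Subgroup.closure (DlGens K l) := fun c =>
    Subgroup.subset_closure ⟨-c, Or.inr (Or.inr ⟨a, b, hab_lt, by
      show (1 : Matrix (Fin l ⊕ Fin l) (Fin l ⊕ Fin l) K)
          + c • (Matrix.single q' p 1 - Matrix.single p' q 1) = _
      module⟩)⟩
  refine ⟨(Xb t * Yb (-t⁻¹) * Xb t * Xb (-1) * Yb 1 * Xb (-1)) *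
      (Xa t⁻¹ * Ya (-t⁻¹⁻¹) * Xa t⁻¹ * Xa (-1) * Ya 1 * Xa (-1)), ?_, ?_⟩
  · exact mul_mem
      (mul_mem (mul_mem (mul_mem (mul_mem (mul_mem (memXb t) (memYb _)) (memXb t))
        (memXb _)) (memYb 1)) (memXb _))
      (mul_mem (mul_mem (mul_mem (mul_mem (mul_mem (memXa _) (memYa _)) (memXa _))
        (memXa _)) (memYa 1)) (memXa _))
  · have hbeta := h_formula p q' p' q h3 h2 h1 h6.symm h5.symm h4.symm t ht
    have halpha := h_formula p q p' q' h1 h2 h3 h4 h5 h6 t⁻¹ (inv_ne_zero ht)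
    have hfin := final_mul p q p' q' h1 h2 h3 h4 h5 h6 t ht
    simp only [Units.val_mul, genU_val, Xa, Ya, Xb, Yb]
    rw [hbeta, halpha, hfin, diag_formula b (by simp [hb]) (t^2) ((t^2)⁻¹)]
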